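/- Let $d \ge 3$ and let $v_1,\dots,v_{d+4} \in \mathbb{C}^{d+1}$ be nonzero vectors representing points that lie on a rational normal curve of degree $d$ (no general position assumption is made). Then for every 6-element subset $I = \{i_1 < \cdots < i_6\}$ of $\{1,\dots,d+4\}$ with complement $I^c = \{j_1 < \cdots < j_{d-2}\}$ one has $[i_1 i_2 i_3 j_1 \cdots j_{d-2}][i_1 i_4 i_5 j_1 \cdots j_{d-2}][i_2 i_4 i_6 j_1 \cdots j_{d-2}][i_3 i_5 i_6 j_1 \cdots j_{d-2}] = [i_1 i_2 i_4 j_1 \cdots j_{d-2}][i_1 i_3 i_5 j_1 \cdots j_{d-2}][i_2 i_3 i_6 j_1 \cdots j_{d-2}][i_4 i_5 i_6 j_1 \cdots j_{d-2}]$. -/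

import Mathlib

open Finset

/-- The (nonzero) vectors `v₁, …, vₙ ∈ ℂ^(d+1)` represent points lying on a rational
normal curve of degree `d` in `ℙ^d(ℂ)`. -/
def OnRNC (d n : ℕ) (v : Fin n → Fin (d + 1) → ℂ) : Prop :=
  ∃ (A : Matrix (Fin (d + 1)) (Fin (d + 1)) ℂ) (a b lam : Fin n → ℂ),
    IsUnit A ∧ (∀ k, (a k, b k) ≠ (0, 0)) ∧ (∀ k, lam k ≠ 0) ∧
    ∀ k, v k = lam k • A.mulVec (fun m => a k ^ (d - (m : ℕ)) * b k ^ (m : ℕ))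

/-- The bracket `[k₁ k₂ ⋯ k_{d+1}]`: the determinant of the `(d+1) × (d+1)` matrix
whose columns are `v (k 0), …, v (k d)` in that order. -/
noncomputable def brk {d n : ℕ} (v : Fin n → Fin (d + 1) → ℂ)
    (k : Fin (d + 1) → Fin n) : ℂ :=
  Matrix.det (Matrix.of fun r c => v (k c) r)

/-- The index list `(a, b, c, j₁, …, j_{d-2})` of length `d+1`. -/
def cat3 {d n : ℕ} (a b c : Fin n) (j : Fin (d - 2) → Fin n) : Fin (d + 1) → Fin n :=
  fun col =>
    if h : (col : ℕ) < 3 then ![a, b, c] ⟨col, h⟩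
    else j ⟨(col : ℕ) - 3, by have := col.isLt; omega⟩

lemma prodsq : ∀ {n : ℕ} (a : Fin n → ℂ),
    (∏ i, ∏ j ∈ Ioi i, (a i * a j)) = ∏ i, a i ^ (n - 1) := by
  intro n
  induction n with
  | zero => intro a; simp
  | succ n ih =>
    intro a
    rw [Fin.prod_univ_succ, Fin.prod_Ioi_zero,
      Finset.prod_congr rfl fun (i : Fin n) _ =>
        Fin.prod_Ioi_succ (fun j => a i.succ * a j) i,
      ih (fun i => a i.succ),
      Fin.prod_univ_succ (f := fun i : Fin (n+1) => a i ^ (n + 1 - 1))]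
    simp only [Nat.add_sub_cancel, Finset.prod_mul_distrib, Finset.prod_const,
      Finset.card_univ, Fintype.card_fin]
    rw [mul_assoc, ← Finset.prod_mul_distrib]
    congr 1
    refine Finset.prod_congr rfl fun i _ => ?_
    have hn : n - 1 + 1 = n := Nat.succ_pred_eq_of_pos i.pos
    rw [← pow_succ', hn]

lemma pv_ne {d : ℕ} (a b : Fin (d+1) → ℂ) (ha : ∀ c, a c ≠ 0) :
    Matrix.det (Matrix.of fun r c : Fin (d+1) => a c ^ (d - (r:ℕ)) * b c ^ (r:ℕ)) =
      ∏ i, ∏ j ∈ Ioi i, (a i * b j - a j * b i) := by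
  have h1 : (Matrix.of fun r c : Fin (d+1) => a c ^ (d - (r:ℕ)) * b c ^ (r:ℕ)) =
      Matrix.of fun r c : Fin (d+1) =>
        (fun c => a c ^ d) c *
          (Matrix.transpose (Matrix.vandermonde fun c => b c * (a c)⁻¹)) r c := by
    ext r c
    simp only [Matrix.of_apply, Matrix.transpose_apply, Matrix.vandermonde_apply]
    rw [pow_sub₀ _ (ha c) (Nat.le_of_lt_succ r.isLt), mul_pow, ← inv_pow]
    ring
  rw [h1, Matrix.det_mul_row, Matrix.det_transpose, Matrix.det_vandermonde]
  have h2 : (∏ c, a c ^ d) = ∏ i, ∏ j ∈ Ioi i, (a i * a j) := by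
    rw [prodsq a, Nat.add_sub_cancel]
  rw [h2, ← Finset.prod_mul_distrib]
  refine Finset.prod_congr rfl fun i _ => ?_
  rw [← Finset.prod_mul_distrib]
  refine Finset.prod_congr rfl fun j _ => ?_
  have hi := ha i; have hj := ha j
  field_simp

lemma shift_det {d : ℕ} (t : ℂ) (a b : Fin (d+1) → ℂ) :
    Matrix.det (Matrix.of fun r c : Fin (d+1) => (a c + t * b c) ^ (d - (r:ℕ)) * b c ^ (r:ℕ)) =
      Matrix.det (Matrix.of fun r c : Fin (d+1) => a c ^ (d - (r:ℕ)) * b c ^ (r:ℕ)) := by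
  set U : Matrix (Fin (d+1)) (Fin (d+1)) ℂ :=
    Matrix.of fun r r' : Fin (d+1) =>
      if (r:ℕ) ≤ (r':ℕ) then ((d - (r:ℕ)).choose ((r':ℕ) - (r:ℕ)) : ℂ) * t ^ ((r':ℕ) - (r:ℕ))
      else 0 with hU
  have hdetU : U.det = 1 := by
    have ht : U.BlockTriangular id := by
      intro i j hij
      have hji : (j:ℕ) < (i:ℕ) := hij
      simp only [hU, Matrix.of_apply]
      rw [if_neg (by omega)]
    rw [Matrix.det_of_upperTriangular ht]
    refine Finset.prod_eq_one fun i _ => ?_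
    simp [hU]
  have hprod : (Matrix.of fun r c : Fin (d+1) => (a c + t * b c) ^ (d - (r:ℕ)) * b c ^ (r:ℕ))
      = U * Matrix.of fun r c : Fin (d+1) => a c ^ (d - (r:ℕ)) * b c ^ (r:ℕ) := by
    ext r c
    simp only [Matrix.mul_apply, hU, Matrix.of_apply]
    have hfin : ∑ r' : Fin (d+1),
        (if (r:ℕ) ≤ (r':ℕ) then ((d - (r:ℕ)).choose ((r':ℕ) - (r:ℕ)) : ℂ) * t ^ ((r':ℕ) - (r:ℕ))
          else 0) * (a c ^ (d - (r':ℕ)) * b c ^ (r':ℕ))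
        = ∑ m ∈ Finset.range (d+1),
        (if (r:ℕ) ≤ m then ((d - (r:ℕ)).choose (m - (r:ℕ)) : ℂ) * t ^ (m - (r:ℕ)) else 0) *
          (a c ^ (d - m) * b c ^ m) :=
      Fin.sum_univ_eq_sum_range (fun m =>
        (if (r:ℕ) ≤ m then ((d - (r:ℕ)).choose (m - (r:ℕ)) : ℂ) * t ^ (m - (r:ℕ)) else 0) *
          (a c ^ (d - m) * b c ^ m)) (d+1)
    rw [hfin, Finset.range_eq_Ico]
    rw [← Finset.sum_subset (Finset.Ico_subset_Ico (Nat.zero_le _) (le_refl (d+1)) :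
        Finset.Ico (r:ℕ) (d+1) ⊆ Finset.Ico 0 (d+1)) ?_]
    · rw [Finset.sum_Ico_eq_sum_range]
      have hr : (r:ℕ) ≤ d := Nat.le_of_lt_succ r.isLt
      have hd1 : d + 1 - (r:ℕ) = (d - (r:ℕ)) + 1 := by omega
      rw [hd1]
      rw [show (a c + t * b c) = (t * b c + a c) from by ring, add_pow, Finset.sum_mul]
      refine Finset.sum_congr rfl fun s hs => ?_
      rw [if_pos (Nat.le_add_right _ _)]
      have h1 : (r:ℕ) + s - (r:ℕ) = s := by omega
      have h2 : d - ((r:ℕ) + s) = d - (r:ℕ) - s := by omega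
      rw [h1, h2, pow_add, mul_pow]
      ring
    · intro m hm hnotm
      rw [if_neg, zero_mul]
      simp only [Finset.mem_Ico] at hm hnotm
      omega
  rw [hprod, Matrix.det_mul, hdetU, one_mul]

lemma pv {d : ℕ} (a b : Fin (d+1) → ℂ) (hab : ∀ c, (a c, b c) ≠ (0,0)) :
    Matrix.det (Matrix.of fun r c : Fin (d+1) => a c ^ (d - (r:ℕ)) * b c ^ (r:ℕ)) =
      ∏ i, ∏ j ∈ Ioi i, (a i * b j - a j * b i) := by
  obtain ⟨t, ht⟩ : ∃ t : ℂ, ∀ c, a c + t * b c ≠ 0 := by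
    obtain ⟨t, ht⟩ :=
      Infinite.exists_notMem_finset (Finset.image (fun c => -(a c) / b c) Finset.univ)
    refine ⟨t, fun c => ?_⟩
    by_cases hb : b c = 0
    · have haz : a c ≠ 0 := fun h => hab c (by rw [h, hb])
      simpa [hb] using haz
    · intro h
      exact ht (Finset.mem_image.2 ⟨c, Finset.mem_univ c, by
        field_simp
        linear_combination -h⟩)
  have h1 := pv_ne (fun c => a c + t * b c) b ht
  rw [shift_det] at h1
  rw [h1]
  exact Finset.prod_congr rfl fun i _ => Finset.prod_congr rfl fun j _ => by ring

lemma brk_formula {d n : ℕ} (v : Fin n → Fin (d+1) → ℂ)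
    (A : Matrix (Fin (d+1)) (Fin (d+1)) ℂ) (a b lam : Fin n → ℂ)
    (hab : ∀ k, (a k, b k) ≠ (0,0))
    (hform : ∀ k, v k = lam k • A.mulVec (fun m => a k ^ (d - (m:ℕ)) * b k ^ (m:ℕ)))
    (k : Fin (d+1) → Fin n) :
    brk v k = A.det * (∏ c, lam (k c)) *
      ∏ c, ∏ c' ∈ Ioi c, (a (k c) * b (k c') - a (k c') * b (k c)) := by
  unfold brk
  have h1 : (Matrix.of fun r c : Fin (d+1) => v (k c) r)
      = Matrix.of fun r c : Fin (d+1) => (fun c => lam (k c)) c *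
          (A * Matrix.of fun r' c : Fin (d+1) =>
            (fun c => a (k c)) c ^ (d - (r':ℕ)) * (fun c => b (k c)) c ^ (r':ℕ)) r c := by
    ext r c
    simp only [Matrix.of_apply]
    rw [hform (k c)]
    simp [Matrix.mul_apply, Matrix.mulVec, dotProduct]
  rw [h1, Matrix.det_mul_row, Matrix.det_mul,
    pv (fun c => a (k c)) (fun c => b (k c)) (fun c => hab (k c))]
  ring

lemma pairprod_cons {N n : ℕ} (x : Fin n) (k : Fin N → Fin n) (F : Fin n → Fin n → ℂ) :
    (∏ c : Fin (N+1), ∏ c' ∈ Ioi c,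
        F ((Fin.cons x k : Fin (N+1) → Fin n) c) ((Fin.cons x k : Fin (N+1) → Fin n) c')) =
      (∏ c : Fin N, F x (k c)) * ∏ c : Fin N, ∏ c' ∈ Ioi c, F (k c) (k c') := by
  rw [Fin.prod_univ_succ]
  congr 1
  · rw [Fin.prod_Ioi_zero]
    exact Finset.prod_congr rfl fun c _ => by rw [Fin.cons_zero, Fin.cons_succ]
  · refine Finset.prod_congr rfl fun c _ => ?_
    rw [Fin.prod_Ioi_succ]
    exact Finset.prod_congr rfl fun c' _ => by rw [Fin.cons_succ, Fin.cons_succ]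

lemma prod_cons3 {N n : ℕ} (f : Fin n → ℂ) (p q r : Fin n) (j : Fin N → Fin n) :
    (∏ c : Fin (N+3), f ((Fin.cons p (Fin.cons q (Fin.cons r j)) : Fin (N+3) → Fin n) c))
      = f p * f q * f r * ∏ m, f (j m) := by
  rw [Fin.prod_univ_succ, Fin.prod_univ_succ, Fin.prod_univ_succ]
  simp only [Fin.cons_zero, Fin.cons_succ]
  ring

lemma pairprod_cons3 {N n : ℕ} (F : Fin n → Fin n → ℂ) (p q r : Fin n) (j : Fin N → Fin n) :
    (∏ c : Fin (N+3), ∏ c' ∈ Ioi c,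
        F ((Fin.cons p (Fin.cons q (Fin.cons r j)) : Fin (N+3) → Fin n) c)
          ((Fin.cons p (Fin.cons q (Fin.cons r j)) : Fin (N+3) → Fin n) c'))
      = F p q * F p r * F q r * ((∏ m, F p (j m)) * (∏ m, F q (j m)) * (∏ m, F r (j m)))
        * ∏ m, ∏ m' ∈ Ioi m, F (j m) (j m') := by
  rw [pairprod_cons, pairprod_cons, pairprod_cons]
  rw [Fin.prod_univ_succ, Fin.prod_univ_succ, Fin.prod_univ_succ]
  simp only [Fin.cons_zero, Fin.cons_succ]
  ring

lemma cat3_eq_cons {d n : ℕ} (p q r : Fin n) (j : Fin (d-2) → Fin n)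
    (he : d - 2 + 3 = d + 1) (c : Fin (d - 2 + 3)) :
    cat3 p q r j (Fin.cast he c) =
      (Fin.cons p (Fin.cons q (Fin.cons r j)) : Fin (d-2+3) → Fin n) c := by
  rcases c with ⟨m, hm⟩
  match m, hm with
  | 0, hm => rfl
  | 1, hm => rfl
  | 2, hm => rfl
  | (m+3), hm =>
    have hL : cat3 p q r j (Fin.cast he ⟨m+3, hm⟩) = j ⟨m, by omega⟩ := by
      show (if h : ((Fin.cast he ⟨m+3, hm⟩ : Fin (d+1)) : ℕ) < 3 then _ else _) = _
      rw [dif_neg (by simp)]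
      congr 1
    have h1 : (⟨m+3, hm⟩ : Fin (d-2+3)) = ((⟨m, by omega⟩ : Fin (d-2)).succ.succ.succ) := by
      simp [Fin.ext_iff]
    rw [hL, h1, Fin.cons_succ, Fin.cons_succ, Fin.cons_succ]

lemma prod_Ioi_cast {m n : ℕ} (h : m = n) (c : Fin m) (g : Fin n → ℂ) :
    ∏ c' ∈ Ioi (Fin.cast h c), g c' = ∏ c' ∈ Ioi c, g (Fin.cast h c') := by
  have hs : Ioi (Fin.cast h c) = Finset.map (finCongr h).toEmbedding (Ioi c) := by
    ext x
    simp [Finset.mem_map_equiv, Fin.lt_def]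
  rw [hs, Finset.prod_map]
  rfl

lemma prod_cat3 {d n : ℕ} (he : d - 2 + 3 = d + 1) (f : Fin n → ℂ)
    (p q r : Fin n) (j : Fin (d-2) → Fin n) :
    (∏ c : Fin (d+1), f (cat3 p q r j c)) = f p * f q * f r * ∏ m, f (j m) := by
  rw [← Fin.prod_congr' (fun c => f (cat3 p q r j c)) he]
  rw [Finset.prod_congr rfl fun c _ => congrArg f (cat3_eq_cons p q r j he c)]
  exact prod_cons3 f p q r j

lemma pairprod_cat3 {d n : ℕ} (he : d - 2 + 3 = d + 1) (F : Fin n → Fin n → ℂ)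
    (p q r : Fin n) (j : Fin (d-2) → Fin n) :
    (∏ c : Fin (d+1), ∏ c' ∈ Ioi c, F (cat3 p q r j c) (cat3 p q r j c'))
      = F p q * F p r * F q r * ((∏ m, F p (j m)) * (∏ m, F q (j m)) * (∏ m, F r (j m)))
        * ∏ m, ∏ m' ∈ Ioi m, F (j m) (j m') := by
  rw [← Fin.prod_congr' (fun c => ∏ c' ∈ Ioi c, F (cat3 p q r j c) (cat3 p q r j c')) he]
  have h1 : ∀ c : Fin (d-2+3),
      (∏ c' ∈ Ioi (Fin.cast he c), F (cat3 p q r j (Fin.cast he c)) (cat3 p q r j c'))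
        = ∏ c' ∈ Ioi c,
            F ((Fin.cons p (Fin.cons q (Fin.cons r j)) : Fin (d-2+3) → Fin n) c)
              ((Fin.cons p (Fin.cons q (Fin.cons r j)) : Fin (d-2+3) → Fin n) c') := by
    intro c
    rw [prod_Ioi_cast he c, cat3_eq_cons p q r j he c]
    exact Finset.prod_congr rfl fun c' _ => by rw [cat3_eq_cons p q r j he c']
  rw [Finset.prod_congr rfl fun c _ => h1 c]
  exact pairprod_cons3 F p q r j

theorem bracket_equations_of_rnc (d : ℕ) (hd : 3 ≤ d)
    (v : Fin (d + 4) → Fin (d + 1) → ℂ) (hv : ∀ k, v k ≠ 0) (hrnc : OnRNC d (d + 4) v) :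
    ∀ (i : Fin 6 → Fin (d + 4)) (j : Fin (d - 2) → Fin (d + 4)),
      StrictMono i → StrictMono j →
      (∀ k : Fin (d + 4), (∃ a, i a = k) ↔ ¬ (∃ b, j b = k)) →
      brk v (cat3 (i 0) (i 1) (i 2) j) * brk v (cat3 (i 0) (i 3) (i 4) j) *
        brk v (cat3 (i 1) (i 3) (i 5) j) * brk v (cat3 (i 2) (i 4) (i 5) j) =
      brk v (cat3 (i 0) (i 1) (i 3) j) * brk v (cat3 (i 0) (i 2) (i 4) j) *
        brk v (cat3 (i 1) (i 2) (i 5) j) * brk v (cat3 (i 3) (i 4) (i 5) j) := by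
  obtain ⟨A, a, b, lam, hA, hab, hlam, hform⟩ := hrnc
  intro i j _ _ _
  have he : d - 2 + 3 = d + 1 := by omega
  have key : ∀ p q r : Fin (d + 4),
      brk v (cat3 p q r j) =
        (A.det * ((lam p * lam q * lam r * ∏ m, lam (j m)))) *
        (((a p * b q - a q * b p) * (a p * b r - a r * b p) * (a q * b r - a r * b q)) *
          ((∏ m, (a p * b (j m) - a (j m) * b p)) * (∏ m, (a q * b (j m) - a (j m) * b q)) *
            (∏ m, (a r * b (j m) - a (j m) * b r))) *
          ∏ m, ∏ m' ∈ Ioi m, (a (j m) * b (j m') - a (j m') * b (j m))) := by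
    intro p q r
    rw [brk_formula v A a b lam hab hform (cat3 p q r j)]
    rw [prod_cat3 he lam p q r j]
    rw [pairprod_cat3 he (fun s t => a s * b t - a t * b s) p q r j]
  rw [key, key, key, key, key, key, key, key]
  ring
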